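/- Let t ≥ 1 and b ≥ 1 be integers and let x1 and x2 be binary words of length n with w(x1) = w(x2) + b. Set N = Σ_{i=b}^{t} min{ C(w(x1), i)·C(n−w(x1), t−i), C(w(x1)−b, i−b)·C(n−w(x1)+b, t+b−i) }. Then: (1) for any sets D1 and D2 of deletion vectors for length-n words, each vector of weight exactly t, with |D1| = |D2|, whose output multiset on x1 equals the output multiset on x2, one has |D1| ≤ N; and (2) for the particular pair x1 = 1^{w(x1)} 0^{n−w(x1)} and x2 = 1^{w(x1)−b} 0^{n+b−w(x1)}, there exist such sets D1 and D2 with |D1| = |D2| = N, so the bound N is attained. -/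

import Mathlib

/-- Applying a deletion vector `S` (a set of coordinate positions) to a word
`x` of length `n`: delete the entries at positions in `S`, keeping the rest in order. -/
def delWord {q n : ℕ} (x : Fin n → Fin q) (S : Finset (Fin n)) : List (Fin q) :=
  ((Finset.univ \ S).sort (· ≤ ·)).map x

/-- Weight of a binary word: the number of entries equal to `1`. -/
def wt {n : ℕ} (x : Fin n → Fin 2) : ℕ := (Finset.univ.filter fun i => x i = 1).card

lemma map_indicator_sorted {n a : ℕ} : ∀ (L : List (Fin n)), L.Pairwise (· ≤ ·) →
    L.map (fun x : Fin n => if (x : ℕ) < a then (1 : Fin 2) else 0)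
      = List.replicate (L.countP (fun x : Fin n => decide ((x : ℕ) < a))) 1
        ++ List.replicate (L.length - L.countP (fun x : Fin n => decide ((x : ℕ) < a))) 0 := by
  intro L
  induction L with
  | nil => simp
  | cons x L ih =>
    intro hs
    rw [List.pairwise_cons] at hs
    obtain ⟨hall, hs'⟩ := hs
    by_cases hx : (x : ℕ) < a
    · simp [List.countP_cons, hx, List.replicate_succ, ih hs']
    · have hz : L.countP (fun x : Fin n => decide ((x : ℕ) < a)) = 0 := by
        rw [List.countP_eq_zero]
        intro y hy
        simp only [decide_eq_true_eq]
        intro hya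
        exact hx (lt_of_le_of_lt (by exact_mod_cast hall y hy) hya)
      have hmap : L.map (fun x : Fin n => if (x : ℕ) < a then (1 : Fin 2) else 0)
          = List.replicate L.length 0 := by
        rw [ih hs', hz]; simp
      simp [List.countP_cons, hx, hz, hmap, List.replicate_succ]

lemma card_filter_lt_fin {n a : ℕ} (ha : a ≤ n) :
    (Finset.univ.filter (fun j : Fin n => (j : ℕ) < a)).card = a := by
  have : (Finset.univ.filter (fun j : Fin n => (j : ℕ) < a)).card = (Finset.range a).card := by
    refine Finset.card_bij (fun j _ => (j : ℕ)) ?_ ?_ ?_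
    · intro j hj; simp at hj ⊢; exact hj
    · intro j hj j' hj' h; exact Fin.ext h
    · intro k hk
      simp at hk
      exact ⟨⟨k, lt_of_lt_of_le hk ha⟩, by simp [hk], rfl⟩
  simpa using this

lemma filter_split {n : ℕ} (S : Finset (Fin n)) (P : Fin n → Prop) [DecidablePred P] :
    (Finset.univ.filter P).card = (S.filter P).card + ((Finset.univ \ S).filter P).card := by
  rw [← Finset.card_union_of_disjoint, ← Finset.filter_union]
  · congr 1
    rw [Finset.union_sdiff_of_subset (Finset.subset_univ S)]
  · exact Finset.disjoint_filter_filter (Finset.disjoint_sdiff)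

lemma class_card_eq {n t i : ℕ} (x : Fin n → Fin 2) (hit : i ≤ t) :
    ((Finset.univ.powersetCard t).filter
        (fun S : Finset (Fin n) => (S.filter fun j => x j = 1).card = i)).card
      = (wt x).choose i * (n - wt x).choose (t - i) := by
  classical
  have hOcard : (Finset.univ.filter (fun j : Fin n => x j = 1)).card = wt x := rfl
  have hO'card : (Finset.univ.filter (fun j : Fin n => ¬ x j = 1)).card = n - wt x := by
    have h := Finset.card_filter_add_card_filter_not (s := (Finset.univ : Finset (Fin n)))
      (p := fun j : Fin n => x j = 1)
    rw [Finset.card_univ, Fintype.card_fin] at h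
    unfold wt
    omega
  rw [← hO'card, ← hOcard, ← Finset.card_powersetCard, ← Finset.card_powersetCard,
    ← Finset.card_product]
  refine Finset.card_bij' (fun S _ => (S.filter (fun j => x j = 1), S.filter (fun j => ¬ x j = 1)))
    (fun p _ => p.1 ∪ p.2) ?_ ?_ ?_ ?_
  · intro S hS
    simp only [Finset.mem_filter, Finset.mem_powersetCard] at hS
    obtain ⟨⟨-, hScard⟩, hSi⟩ := hS
    simp only [Finset.mem_product, Finset.mem_powersetCard]
    refine ⟨⟨Finset.filter_subset_filter _ (Finset.subset_univ S), hSi⟩,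
      Finset.filter_subset_filter _ (Finset.subset_univ S), ?_⟩
    have := Finset.card_filter_add_card_filter_not (s := S) (p := fun j => x j = 1)
    omega
  · intro p hp
    simp only [Finset.mem_product, Finset.mem_powersetCard] at hp
    obtain ⟨⟨hp1, hp1c⟩, hp2, hp2c⟩ := hp
    have hmem1 : ∀ j ∈ p.1, x j = 1 := fun j hj => (Finset.mem_filter.mp (hp1 hj)).2
    have hmem2 : ∀ j ∈ p.2, ¬ x j = 1 := fun j hj => (Finset.mem_filter.mp (hp2 hj)).2
    have hdisj : Disjoint p.1 p.2 := by
      rw [Finset.disjoint_left]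
      intro j hj1 hj2
      exact hmem2 j hj2 (hmem1 j hj1)
    have hfil1 : (p.1 ∪ p.2).filter (fun j => x j = 1) = p.1 := by
      rw [Finset.filter_union, Finset.filter_true_of_mem hmem1,
        Finset.filter_false_of_mem hmem2, Finset.union_empty]
    simp only [Finset.mem_filter, Finset.mem_powersetCard]
    refine ⟨⟨Finset.subset_univ _, ?_⟩, by rw [hfil1, hp1c]⟩
    rw [Finset.card_union_of_disjoint hdisj, hp1c, hp2c]
    omega
  · intro S hS
    exact Finset.filter_union_filter_not_eq _ S
  · intro p hp
    simp only [Finset.mem_product, Finset.mem_powersetCard] at hp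
    obtain ⟨⟨hp1, hp1c⟩, hp2, hp2c⟩ := hp
    have hmem1 : ∀ j ∈ p.1, x j = 1 := fun j hj => (Finset.mem_filter.mp (hp1 hj)).2
    have hmem2 : ∀ j ∈ p.2, ¬ x j = 1 := fun j hj => (Finset.mem_filter.mp (hp2 hj)).2
    have hfil1 : (p.1 ∪ p.2).filter (fun j => x j = 1) = p.1 := by
      rw [Finset.filter_union, Finset.filter_true_of_mem hmem1,
        Finset.filter_false_of_mem hmem2, Finset.union_empty]
    have hfil2 : (p.1 ∪ p.2).filter (fun j => ¬ x j = 1) = p.2 := by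
      rw [Finset.filter_union, Finset.filter_false_of_mem (fun j hj h => h (hmem1 j hj)),
        Finset.filter_true_of_mem hmem2, Finset.empty_union]
    ext <;> simp [hfil1, hfil2]

lemma countP_sort_eq {n : ℕ} (s : Finset (Fin n)) (P : Fin n → Prop) [DecidablePred P] :
    (s.sort (· ≤ ·)).countP (fun j => decide (P j)) = (s.filter P).card := by
  have h1 : Multiset.countP P ↑(s.sort (· ≤ ·)) = (s.sort (· ≤ ·)).countP (fun j => decide (P j)) :=
    Multiset.coe_countP _ _
  rw [Finset.sort_eq, Multiset.countP_eq_card_filter] at h1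
  rw [← h1]
  rfl

lemma lw_delWord {n : ℕ} (x : Fin n → Fin 2) (S : Finset (Fin n)) :
    (delWord x S).countP (fun a => decide (a = (1 : Fin 2)))
      = wt x - (S.filter fun j => x j = 1).card := by
  unfold delWord
  rw [List.countP_map]
  have h2 : ((fun a => decide (a = (1 : Fin 2))) ∘ x) = fun j => decide (x j = 1) := rfl
  rw [h2, countP_sort_eq]
  have := filter_split S (fun j => x j = 1)
  unfold wt
  omega

lemma filterwt_le_wt {n : ℕ} (x : Fin n → Fin 2) (S : Finset (Fin n)) :
    (S.filter fun j => x j = 1).card ≤ wt x := by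
  have := filter_split S (fun j => x j = 1)
  unfold wt
  omega

lemma delWord_indicator {n t a i : ℕ} (ha : a ≤ n) (S : Finset (Fin n)) (hS : S.card = t)
    (hi : (S.filter fun j => (if ((j : Fin n) : ℕ) < a then (1 : Fin 2) else 0) = 1).card = i) :
    delWord (fun j : Fin n => if (j : ℕ) < a then (1 : Fin 2) else 0) S
      = List.replicate (a - i) 1 ++ List.replicate ((n - t) - (a - i)) 0 ∧ i ≤ a := by
  have hpred : ∀ j : Fin n, ((if ((j : Fin n) : ℕ) < a then (1 : Fin 2) else 0) = 1) ↔ (j : ℕ) < a := by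
    intro j
    by_cases h : (j : ℕ) < a <;> simp [h]
  have hi' : (S.filter fun j : Fin n => (j : ℕ) < a).card = i := by
    rw [← hi]; congr 1; ext j; simp [hpred j]
  have hsplit := filter_split S (fun j : Fin n => (j : ℕ) < a)
  rw [card_filter_lt_fin ha, hi'] at hsplit
  have hc : ((Finset.univ \ S).filter (fun j : Fin n => (j : ℕ) < a)).card = a - i := by omega
  have hlen : ((Finset.univ \ S).sort (· ≤ ·)).length = n - t := by
    rw [Finset.length_sort, Finset.card_sdiff_of_subset (Finset.subset_univ S), Finset.card_univ,
      Fintype.card_fin, hS]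
  unfold delWord
  rw [map_indicator_sorted _ (Finset.pairwise_sort _ _)]
  rw [countP_sort_eq, hc, hlen]
  exact ⟨rfl, by omega⟩

lemma wt_indicator {n a : ℕ} (ha : a ≤ n) :
    wt (fun j : Fin n => if (j : ℕ) < a then (1 : Fin 2) else 0) = a := by
  unfold wt
  have he : (Finset.univ.filter fun i : Fin n => (if (i : ℕ) < a then (1 : Fin 2) else 0) = 1)
      = Finset.univ.filter (fun j : Fin n => (j : ℕ) < a) := by
    ext j
    by_cases h : (j : ℕ) < a <;> simp [h]
  rw [he, card_filter_lt_fin ha]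

lemma wt_le {n : ℕ} (x : Fin n → Fin 2) : wt x ≤ n := by
  have h := Finset.card_filter_le (Finset.univ : Finset (Fin n)) (fun i => x i = 1)
  rw [Finset.card_univ, Fintype.card_fin] at h
  exact h

/-- The fiber of `D` consisting of sets deleting exactly `i` ones from `x` has
cardinality at most the total number of such weight-`t` deletion sets. -/
lemma fiber_le_class {n t i : ℕ} (x : Fin n → Fin 2) (D : Finset (Finset (Fin n)))
    (hD : ∀ S ∈ D, S.card = t) (hit : i ≤ t) :
    (D.filter fun S => (S.filter fun j => x j = 1).card = i).card
      ≤ (wt x).choose i * (n - wt x).choose (t - i) := by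
  classical
  rw [← class_card_eq x hit]
  apply Finset.card_le_card
  intro S hS
  rw [Finset.mem_filter] at hS ⊢
  exact ⟨Finset.mem_powersetCard.mpr ⟨Finset.subset_univ S, hD S hS.1⟩, hS.2⟩

/-- If `w(x1) = w(x2) + b` with `b ≥ 1`, then any pair of sets of deletion vectors of weight
exactly `t` with equal output multisets on `x1` and `x2` has size at most
`N = ∑_{i=b}^{t} min(C(w(x1),i)·C(n-w(x1),t-i), C(w(x1)-b,i-b)·C(n-w(x1)+b,t+b-i))`,
and this bound is attained by the pair `1^{w(x1)} 0^{n-w(x1)}`, `1^{w(x1)-b} 0^{n+b-w(x1)}`. -/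
theorem multiset_model_weight_difference_bound
    (t b n : ℕ) (ht : 1 ≤ t) (hb : 1 ≤ b)
    (x1 x2 : Fin n → Fin 2) (hw : wt x1 = wt x2 + b) :
    let N := ∑ i ∈ Finset.Icc b t,
      min ((wt x1).choose i * (n - wt x1).choose (t - i))
          ((wt x1 - b).choose (i - b) * (n - wt x1 + b).choose (t + b - i))
    (∀ D1 D2 : Finset (Finset (Fin n)),
      (∀ S ∈ D1, S.card = t) → (∀ S ∈ D2, S.card = t) →
      D1.card = D2.card →
      Multiset.map (delWord x1) D1.val = Multiset.map (delWord x2) D2.val →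
      D1.card ≤ N) ∧
    (∃ D1 D2 : Finset (Finset (Fin n)),
      (∀ S ∈ D1, S.card = t) ∧ (∀ S ∈ D2, S.card = t) ∧
      D1.card = N ∧ D2.card = N ∧
      Multiset.map (delWord (fun i : Fin n => if (i : ℕ) < wt x1 then (1 : Fin 2) else 0)) D1.val =
        Multiset.map (delWord (fun i : Fin n => if (i : ℕ) < wt x1 - b then (1 : Fin 2) else 0))
          D2.val) := by
  classical
  intro N
  have hw1n : wt x1 ≤ n := wt_le x1
  have hbw : b ≤ wt x1 := by omega
  constructor
  · -- Part 1: the upper bound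
    intro D1 D2 h1 h2 hcard hmul
    have key : ∀ k : ℕ,
        (D1.filter fun S => (delWord x1 S).countP (fun a => decide (a = (1 : Fin 2))) = k).card
          = (D2.filter fun S => (delWord x2 S).countP (fun a => decide (a = (1 : Fin 2))) = k).card := by
      intro k
      have h := congrArg (Multiset.countP
        (fun L : List (Fin 2) => L.countP (fun a => decide (a = (1 : Fin 2))) = k)) hmul
      rw [Multiset.countP_map, Multiset.countP_map] at h
      exact h
    -- fiber over number of deleted ones
    have hfibeq : ∀ i : ℕ, i ≤ wt x1 →
        (D1.filter fun S => (S.filter fun j => x1 j = 1).card = i).card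
          = (D2.filter fun S => (S.filter fun j => x2 j = 1).card + (wt x1 - i) = wt x2).card := by
      intro i hiw
      have e1 : D1.filter (fun S => (S.filter fun j => x1 j = 1).card = i)
          = D1.filter (fun S =>
              (delWord x1 S).countP (fun a => decide (a = (1 : Fin 2))) = wt x1 - i) := by
        apply Finset.filter_congr
        intro S _
        rw [lw_delWord]
        have := filterwt_le_wt x1 S
        omega
      have e2 : D2.filter (fun S =>
              (delWord x2 S).countP (fun a => decide (a = (1 : Fin 2))) = wt x1 - i)
          = D2.filter (fun S => (S.filter fun j => x2 j = 1).card + (wt x1 - i) = wt x2) := by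
        apply Finset.filter_congr
        intro S _
        rw [lw_delWord]
        have := filterwt_le_wt x2 S
        omega
      rw [e1, key, e2]
    have hcount : D1.card = ∑ i ∈ Finset.range (t + 1),
        (D1.filter fun S => (S.filter fun j => x1 j = 1).card = i).card := by
      apply Finset.card_eq_sum_card_fiberwise
      intro S hS
      rw [Finset.mem_coe, Finset.mem_range]
      beta_reduce
      have h := Finset.card_filter_le S (fun j => x1 j = 1)
      rw [h1 S hS] at h
      omega
    rw [hcount]
    have hsub : Finset.Icc b t ⊆ Finset.range (t + 1) := by
      intro i hi
      rw [Finset.mem_Icc] at hi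
      rw [Finset.mem_range]
      omega
    have hzero : ∀ i ∈ Finset.range (t + 1), i ∉ Finset.Icc b t →
        (D1.filter fun S => (S.filter fun j => x1 j = 1).card = i).card = 0 := by
      intro i hi hni
      rw [Finset.mem_range] at hi
      rw [Finset.mem_Icc] at hni
      have hib : i < b := by omega
      rw [hfibeq i (by omega)]
      rw [Finset.card_eq_zero, Finset.filter_eq_empty_iff]
      intro S _
      omega
    rw [← Finset.sum_subset hsub hzero]
    apply Finset.sum_le_sum
    intro i hi
    rw [Finset.mem_Icc] at hi
    apply le_min
    · exact fiber_le_class x1 D1 h1 hi.2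
    · by_cases hiw : i ≤ wt x1
      · have e3 : D2.filter (fun S => (S.filter fun j => x2 j = 1).card + (wt x1 - i) = wt x2)
            = D2.filter (fun S => (S.filter fun j => x2 j = 1).card = i - b) := by
          apply Finset.filter_congr
          intro S _
          have := filterwt_le_wt x2 S
          omega
        rw [hfibeq i hiw, e3]
        have h4 := fiber_le_class x2 D2 h2 (show i - b ≤ t by omega)
        have e5 : wt x2 = wt x1 - b := by omega
        have e6 : n - (wt x1 - b) = n - wt x1 + b := by omega
        have e7 : t - (i - b) = t + b - i := by omega
        rw [e5, e6, e7] at h4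
        exact h4
      · have : (D1.filter fun S => (S.filter fun j => x1 j = 1).card = i).card = 0 := by
          rw [Finset.card_eq_zero, Finset.filter_eq_empty_iff]
          intro S _ hc
          have := filterwt_le_wt x1 S
          omega
        rw [this]
        exact Nat.zero_le _
  · -- Part 2: attainment
    set w1 := wt x1 with hw1
    set m : ℕ → ℕ := fun i =>
      min (w1.choose i * (n - w1).choose (t - i))
          ((w1 - b).choose (i - b) * (n - w1 + b).choose (t + b - i)) with hm
    have hwy1 : wt (fun j : Fin n => if (j : ℕ) < w1 then (1 : Fin 2) else 0) = w1 :=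
      wt_indicator hw1n
    have hwy2 : wt (fun j : Fin n => if (j : ℕ) < w1 - b then (1 : Fin 2) else 0) = w1 - b :=
      wt_indicator (by omega)
    have hcls1 : ∀ i : ℕ, i ≤ t →
        ((Finset.univ.powersetCard t).filter (fun S : Finset (Fin n) =>
          (S.filter fun j => (if ((j : Fin n) : ℕ) < w1 then (1 : Fin 2) else 0) = 1).card = i)).card
        = w1.choose i * (n - w1).choose (t - i) := by
      intro i hit
      rw [class_card_eq _ hit, hwy1]
    have hcls2 : ∀ i : ℕ, b ≤ i → i ≤ t →
        ((Finset.univ.powersetCard t).filter (fun S : Finset (Fin n) =>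
          (S.filter fun j => (if ((j : Fin n) : ℕ) < w1 - b then (1 : Fin 2) else 0) = 1).card
            = i - b)).card
        = (w1 - b).choose (i - b) * (n - w1 + b).choose (t + b - i) := by
      intro i hbi hit
      rw [class_card_eq _ (show i - b ≤ t by omega), hwy2]
      have e1 : n - (w1 - b) = n - w1 + b := by omega
      have e2 : t - (i - b) = t + b - i := by omega
      rw [e1, e2]
    have hex1 : ∀ i : ℕ, ∃ F : Finset (Finset (Fin n)),
        F ⊆ (Finset.univ.powersetCard t).filter (fun S : Finset (Fin n) =>
          (S.filter fun j => (if ((j : Fin n) : ℕ) < w1 then (1 : Fin 2) else 0) = 1).card = i) ∧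
        F.card = (if b ≤ i ∧ i ≤ t then m i else 0) := by
      intro i
      by_cases hi : b ≤ i ∧ i ≤ t
      · rw [if_pos hi]
        apply Finset.exists_subset_card_eq
        rw [hcls1 i hi.2]
        exact min_le_left _ _
      · exact ⟨∅, Finset.empty_subset _, by rw [if_neg hi, Finset.card_empty]⟩
    have hex2 : ∀ i : ℕ, ∃ F : Finset (Finset (Fin n)),
        F ⊆ (Finset.univ.powersetCard t).filter (fun S : Finset (Fin n) =>
          (S.filter fun j => (if ((j : Fin n) : ℕ) < w1 - b then (1 : Fin 2) else 0) = 1).card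
            = i - b) ∧
        F.card = (if b ≤ i ∧ i ≤ t then m i else 0) := by
      intro i
      by_cases hi : b ≤ i ∧ i ≤ t
      · rw [if_pos hi]
        apply Finset.exists_subset_card_eq
        rw [hcls2 i hi.1 hi.2]
        exact min_le_right _ _
      · exact ⟨∅, Finset.empty_subset _, by rw [if_neg hi, Finset.card_empty]⟩
    choose F1 hF1sub hF1card using hex1
    choose F2 hF2sub hF2card using hex2
    have hmemF1 : ∀ i : ℕ, ∀ S ∈ F1 i, S.card = t ∧
        (S.filter fun j => (if ((j : Fin n) : ℕ) < w1 then (1 : Fin 2) else 0) = 1).card = i := by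
      intro i S hS
      have := hF1sub i hS
      rw [Finset.mem_filter, Finset.mem_powersetCard] at this
      exact ⟨this.1.2, this.2⟩
    have hmemF2 : ∀ i : ℕ, ∀ S ∈ F2 i, S.card = t ∧
        (S.filter fun j =>
          (if ((j : Fin n) : ℕ) < w1 - b then (1 : Fin 2) else 0) = 1).card = i - b := by
      intro i S hS
      have := hF2sub i hS
      rw [Finset.mem_filter, Finset.mem_powersetCard] at this
      exact ⟨this.1.2, this.2⟩
    have hdisj1 : (↑(Finset.Icc b t) : Set ℕ).PairwiseDisjoint F1 := by
      intro i _ j _ hij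
      have : Disjoint (F1 i) (F1 j) := Finset.disjoint_left.mpr (by
        intro S hSi hSj
        exact absurd (((hmemF1 i S hSi).2).symm.trans ((hmemF1 j S hSj).2)) hij)
      exact this
    have hdisj2 : (↑(Finset.Icc b t) : Set ℕ).PairwiseDisjoint F2 := by
      intro i hi j hj hij
      rw [Finset.mem_coe, Finset.mem_Icc] at hi hj
      have : Disjoint (F2 i) (F2 j) := Finset.disjoint_left.mpr (by
        intro S hSi hSj
        have := ((hmemF2 i S hSi).2).symm.trans ((hmemF2 j S hSj).2)
        omega)
      exact this
    refine ⟨(Finset.Icc b t).disjiUnion F1 hdisj1, (Finset.Icc b t).disjiUnion F2 hdisj2,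
      ?_, ?_, ?_, ?_, ?_⟩
    · intro S hS
      rw [Finset.mem_disjiUnion] at hS
      obtain ⟨i, _, hSi⟩ := hS
      exact (hmemF1 i S hSi).1
    · intro S hS
      rw [Finset.mem_disjiUnion] at hS
      obtain ⟨i, _, hSi⟩ := hS
      exact (hmemF2 i S hSi).1
    · rw [Finset.card_disjiUnion]
      apply Finset.sum_congr rfl
      intro i hi
      rw [Finset.mem_Icc] at hi
      rw [hF1card i, if_pos hi]
    · rw [Finset.card_disjiUnion]
      apply Finset.sum_congr rfl
      intro i hi
      rw [Finset.mem_Icc] at hi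
      rw [hF2card i, if_pos hi]
    · rw [Finset.disjiUnion_val, Finset.disjiUnion_val, Multiset.map_bind, Multiset.map_bind]
      apply Multiset.bind_congr
      intro i hi
      rw [← Finset.mem_def, Finset.mem_Icc] at hi
      have hconst1 : ∀ S ∈ (F1 i).val,
          delWord (fun j : Fin n => if (j : ℕ) < w1 then (1 : Fin 2) else 0) S
            = List.replicate (w1 - i) 1 ++ List.replicate ((n - t) - (w1 - i)) 0 := by
        intro S hS
        obtain ⟨hSc, hSf⟩ := hmemF1 i S hS
        exact (delWord_indicator hw1n S hSc hSf).1
      have hconst2 : ∀ S ∈ (F2 i).val,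
          delWord (fun j : Fin n => if (j : ℕ) < w1 - b then (1 : Fin 2) else 0) S
            = List.replicate (w1 - i) 1 ++ List.replicate ((n - t) - (w1 - i)) 0 := by
        intro S hS
        obtain ⟨hSc, hSf⟩ := hmemF2 i S hS
        obtain ⟨hdel, hle⟩ := delWord_indicator (show w1 - b ≤ n by omega) S hSc hSf
        rw [hdel]
        have e : (w1 - b) - (i - b) = w1 - i := by omega
        rw [e]
      rw [Multiset.map_congr rfl hconst1, Multiset.map_congr rfl hconst2,
        Multiset.map_const', Multiset.map_const']
      have : Multiset.card (F1 i).val = Multiset.card (F2 i).val := by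
        have c1 : Multiset.card (F1 i).val = (F1 i).card := rfl
        have c2 : Multiset.card (F2 i).val = (F2 i).card := rfl
        rw [c1, c2, hF1card i, hF2card i]
      rw [this]
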